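/- Let f: F_2^n → {0,1} and let H be a uniformly random linear subspace of F_2^n of size h (spanned by uniformly random vectors). Define f̂_H(α) = E_{x∈H}[f(x)(−1)^{α·x}]. Then E_H[(f̂_H(α) − E_H[f̂_H(α)])²] ≤ 14/h, and consequently by Chebyshev, for every η > 0, Pr_H[|f̂_H(α) − f̂(α)| ≥ 2/h + η] ≤ 14/(hη²). -/

import Mathlib

open Finset
open scoped Classical

abbrev V (n : ℕ) : Type := Fin n → ZMod 2

def dotp {n : ℕ} (α x : V n) : ZMod 2 := ∑ i, α i * x i

def IsBool {n : ℕ} (f : V n → ℝ) : Prop := ∀ x, f x = 0 ∨ f x = 1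

/-- `f` is odd-cycle-free: no odd `k` and `x_1,…,x_k` in the support summing to `0`. -/
def OCF {n : ℕ} (f : V n → ℝ) : Prop :=
  ∀ k : ℕ, Odd k → ¬ ∃ x : Fin k → V n, (∀ i, f (x i) = 1) ∧ (∑ i, x i) = 0

noncomputable def fhat {n : ℕ} (f : V n → ℝ) (α : V n) : ℝ :=
  (∑ x : V n, f x * (-1 : ℝ) ^ (dotp α x).val) / 2 ^ n

/-- `f` is `ε`-far from odd-cycle-free: every Boolean OCF function differs from `f`
on at least `ε·2^n` points. -/
def FarFromOCF {n : ℕ} (ε : ℝ) (f : V n → ℝ) : Prop :=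
  ∀ g : V n → ℝ, IsBool g → OCF g →
    ε * 2 ^ n ≤ ((Finset.univ.filter fun x => f x ≠ g x).card : ℝ)

/-- The finite set of linear subspaces of `F_2^n` (as finsets) of size `h`. -/
def subspaces (n h : ℕ) : Finset (Finset (V n)) :=
  Finset.univ.filter fun H => H.card = h ∧ (0 : V n) ∈ H ∧ ∀ x ∈ H, ∀ y ∈ H, x + y ∈ H

/-- The restricted Fourier coefficient `f̂_H(α) = E_{x∈H}[f(x)(−1)^{α·x}]`. -/
noncomputable def fhatOn {n : ℕ} (f : V n → ℝ) (H : Finset (V n)) (α : V n) : ℝ :=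
  (∑ x ∈ H, f x * (-1 : ℝ) ^ (dotp α x).val) / H.card

/-- Expectation over a uniformly random subspace of size `h`. -/
noncomputable def EH (n h : ℕ) (X : Finset (V n) → ℝ) : ℝ :=
  (∑ H ∈ subspaces n h, X H) / (subspaces n h).card

lemma pair_li {n : ℕ} (x y : V n) (hx : x ≠ 0) (hy : y ≠ 0) (hxy : x ≠ y) :
    LinearIndependent (ZMod 2) ![x, y] := by
  rw [LinearIndependent.pair_iff]
  intro s t hst
  have hz : ∀ z : ZMod 2, z = 0 ∨ z = 1 := by decide
  have hneg : ∀ z : ZMod 2, -z = z := by decide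
  rcases hz s with rfl | rfl <;> rcases hz t with rfl | rfl <;> simp_all [two_smul]
  refine hxy ?_
  rw [eq_neg_of_add_eq_zero_left hst]; funext i; exact (by decide : ∀ z : ZMod 2, -z = z) _

lemma exists_basis_pair {n : ℕ} (hn : 2 ≤ n) (x y : V n) (hx : x ≠ 0) (hy : y ≠ 0) (hxy : x ≠ y) :
    ∃ B : Module.Basis (Fin n) (ZMod 2) (V n), B ⟨0, by omega⟩ = x ∧ B ⟨1, by omega⟩ = y := by
  have hli := pair_li x y hx hy hxy
  have hli' : LinearIndepOn (ZMod 2) id (Set.range ![x, y]) :=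
    hli.linearIndepOn_id
  set t : Set (V n) := hli'.extend (Set.subset_univ _) with ht
  let B : Module.Basis t (ZMod 2) (V n) := Module.Basis.extend hli'
  have hxt : x ∈ t := hli'.subset_extend _ ⟨0, rfl⟩
  have hyt : y ∈ t := hli'.subset_extend _ ⟨1, rfl⟩
  have hcard : Fintype.card t = n := by
    rw [← Module.finrank_eq_card_basis B]
    simp [Module.finrank_fintype_fun_eq_card]
  let e : t ≃ Fin n := Fintype.equivFinOfCardEq hcard
  let z0 : Fin n := ⟨0, by omega⟩
  let z1 : Fin n := ⟨1, by omega⟩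
  let e1 : t ≃ Fin n := e.trans (Equiv.swap (e ⟨x, hxt⟩) z0)
  have he1x : e1 ⟨x, hxt⟩ = z0 := by simp [e1, Equiv.swap_apply_left]
  let b : Fin n := e1 ⟨y, hyt⟩
  have hb0 : b ≠ z0 := by
    rw [← he1x]
    intro hcontra
    have := congrArg Subtype.val (e1.injective hcontra)
    simp only [] at this
    exact hxy (Subtype.mk_eq_mk.mp (e1.injective hcontra)).symm
  let e2 : t ≃ Fin n := e1.trans (Equiv.swap b z1)
  have he2y : e2 ⟨y, hyt⟩ = z1 := by simp [e2, b, Equiv.swap_apply_left]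
  have he2x : e2 ⟨x, hxt⟩ = z0 := by
    have h01 : z0 ≠ z1 := by simp [z0, z1, Fin.ext_iff]
    simp [e2, he1x, Equiv.swap_apply_of_ne_of_ne (Ne.symm hb0) h01]
  refine ⟨B.reindex e2, ?_, ?_⟩
  · rw [Module.Basis.reindex_apply]
    show B (e2.symm z0) = x
    rw [← he2x, Equiv.symm_apply_apply]
    exact Module.Basis.extend_apply_self _ _
  · rw [Module.Basis.reindex_apply]
    show B (e2.symm z1) = y
    rw [← he2y, Equiv.symm_apply_apply]
    exact Module.Basis.extend_apply_self _ _

lemma exists_lequiv_pair {n : ℕ} (x y x' y' : V n) (hx : x ≠ 0) (hy : y ≠ 0) (hxy : x ≠ y)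
    (hx' : x' ≠ 0) (hy' : y' ≠ 0) (hxy' : x' ≠ y') :
    ∃ A : V n ≃ₗ[ZMod 2] V n, A x = x' ∧ A y = y' := by
  have hn : 2 ≤ n := by
    by_contra hcon
    push_neg at hcon
    have : Fintype.card (V n) ≤ 2 := by
      have := Fintype.card_fun (α := Fin n) (β := ZMod 2)
      rw [Fintype.card_fin] at this
      rw [this]
      calc (2:ℕ)^n ≤ 2^1 := Nat.pow_le_pow_right (by norm_num) (by omega)
      _ = 2 := by norm_num
    have hcard3 : 3 ≤ Fintype.card (V n) := by
      have : ({0, x, y} : Finset (V n)).card = 3 := by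
        rw [Finset.card_insert_of_notMem (by simp [Ne.symm hx, Ne.symm hy]),
          Finset.card_insert_of_notMem (by simp [hxy]), Finset.card_singleton]
      calc 3 = ({0, x, y} : Finset (V n)).card := this.symm
      _ ≤ Fintype.card (V n) := Finset.card_le_univ _
    omega
  obtain ⟨B, hB0, hB1⟩ := exists_basis_pair hn x y hx hy hxy
  obtain ⟨B', hB0', hB1'⟩ := exists_basis_pair hn x' y' hx' hy' hxy'
  refine ⟨B.equiv B' (Equiv.refl _), ?_, ?_⟩
  · rw [← hB0, ← hB0', Module.Basis.equiv_apply]; rfl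
  · rw [← hB1, ← hB1', Module.Basis.equiv_apply]; rfl

lemma mem_subspaces {n h : ℕ} {H : Finset (V n)} : H ∈ subspaces n h ↔
    H.card = h ∧ (0 : V n) ∈ H ∧ ∀ x ∈ H, ∀ y ∈ H, x + y ∈ H := by
  simp [subspaces]

lemma image_mem_subspaces {n h : ℕ} (A : V n ≃ₗ[ZMod 2] V n) {H : Finset (V n)}
    (hH : H ∈ subspaces n h) : H.image (A : V n → V n) ∈ subspaces n h := by
  rw [mem_subspaces] at hH ⊢
  obtain ⟨hc, h0, hadd⟩ := hH
  refine ⟨?_, ?_, ?_⟩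
  · rw [Finset.card_image_of_injective _ A.injective]; exact hc
  · exact Finset.mem_image.mpr ⟨0, h0, map_zero A⟩
  · intro x hx y hy
    obtain ⟨a, ha, rfl⟩ := Finset.mem_image.mp hx
    obtain ⟨b, hb, rfl⟩ := Finset.mem_image.mp hy
    exact Finset.mem_image.mpr ⟨a + b, hadd a ha b hb, map_add A a b⟩

lemma mem_image_lequiv {n : ℕ} (A : V n ≃ₗ[ZMod 2] V n) {H : Finset (V n)} {x : V n} :
    A x ∈ H.image (A : V n → V n) ↔ x ∈ H := by
  constructor
  · intro hx
    obtain ⟨a, ha, hax⟩ := Finset.mem_image.mp hx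
    rwa [← A.injective hax]
  · intro hx; exact Finset.mem_image_of_mem _ hx

/-- counting subspaces containing given points is invariant under a linear automorphism -/
lemma card_filter_image {n h : ℕ} (A : V n ≃ₗ[ZMod 2] V n) (p : Finset (V n) → Prop)
    (q : Finset (V n) → Prop) [DecidablePred p] [DecidablePred q]
    (hpq : ∀ H ∈ subspaces n h, (p H ↔ q (H.image (A : V n → V n)))) :
    ((subspaces n h).filter p).card = ((subspaces n h).filter q).card := by
  apply Finset.card_bij' (fun H _ => H.image (A : V n → V n))
    (fun H _ => H.image (A.symm : V n → V n))
  · intro H hH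
    rw [Finset.image_image]
    ext a; simp
  · intro H hH
    rw [Finset.image_image]
    ext a; simp
  · intro H hH
    rw [Finset.mem_filter] at hH ⊢
    exact ⟨image_mem_subspaces A hH.1, (hpq H hH.1).mp hH.2⟩
  · intro H hH
    rw [Finset.mem_filter] at hH ⊢
    have h1 : (H.image (A.symm : V n → V n)).image (A : V n → V n) = H := by
      rw [Finset.image_image]
      ext a; simp
    refine ⟨image_mem_subspaces A.symm hH.1, ?_⟩
    rw [hpq _ (image_mem_subspaces A.symm hH.1), h1]
    exact hH.2

noncomputable def cnt (n h : ℕ) (x : V n) : ℕ := ((subspaces n h).filter fun H => x ∈ H).card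
noncomputable def cnt2 (n h : ℕ) (x y : V n) : ℕ :=
  ((subspaces n h).filter fun H => x ∈ H ∧ y ∈ H).card

lemma cnt_zero (n h : ℕ) : cnt n h 0 = (subspaces n h).card := by
  unfold cnt
  rw [Finset.filter_true_of_mem]
  intro H hH; exact (mem_subspaces.mp hH).2.1

lemma cnt2_zero_left (n h : ℕ) (y : V n) : cnt2 n h 0 y = cnt n h y := by
  unfold cnt2 cnt
  congr 1
  apply Finset.filter_congr
  intro H hH
  simp [(mem_subspaces.mp hH).2.1]

lemma cnt2_zero_right (n h : ℕ) (x : V n) : cnt2 n h x 0 = cnt n h x := by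
  unfold cnt2 cnt
  congr 1
  apply Finset.filter_congr
  intro H hH
  simp [(mem_subspaces.mp hH).2.1]

lemma cnt2_diag (n h : ℕ) (x : V n) : cnt2 n h x x = cnt n h x := by
  unfold cnt2 cnt
  congr 1
  apply Finset.filter_congr
  intro H hH
  simp

lemma cnt_const {n h : ℕ} {x y : V n} (hx : x ≠ 0) (hy : y ≠ 0) : cnt n h x = cnt n h y := by
  rcases eq_or_ne x y with rfl | hxy
  · rfl
  obtain ⟨A, hAx, _⟩ := exists_lequiv_pair x y y x hx hy hxy hy hx (Ne.symm hxy)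
  unfold cnt
  apply card_filter_image A
  intro H _
  rw [← hAx, mem_image_lequiv]

lemma cnt2_const {n h : ℕ} {x y x' y' : V n} (hx : x ≠ 0) (hy : y ≠ 0) (hxy : x ≠ y)
    (hx' : x' ≠ 0) (hy' : y' ≠ 0) (hxy' : x' ≠ y') : cnt2 n h x y = cnt2 n h x' y' := by
  obtain ⟨A, hAx, hAy⟩ := exists_lequiv_pair x y x' y' hx hy hxy hx' hy' hxy'
  unfold cnt2
  apply card_filter_image A
  intro H _
  rw [← hAx, ← hAy, mem_image_lequiv, mem_image_lequiv]

lemma sum_cnt (n h : ℕ) : ∑ x ∈ (univ : Finset (V n)).erase 0, cnt n h x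
    = (subspaces n h).card * (h - 1) := by
  unfold cnt
  simp_rw [Finset.card_filter]
  rw [Finset.sum_comm]
  rw [← Finset.sum_const_nat (m := h - 1) ?_]
  intro H hH
  obtain ⟨hc, h0, _⟩ := mem_subspaces.mp hH
  have : ((univ : Finset (V n)).erase 0).filter (fun y => y ∈ H) = H.erase 0 := by
    ext a; simp [and_comm]
  rw [← Finset.card_filter, this, Finset.card_erase_of_mem h0, hc]

lemma sum_cnt2 (n h : ℕ) :
    ∑ x ∈ (univ : Finset (V n)).erase 0, ∑ y ∈ ((univ : Finset (V n)).erase 0).erase x,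
      cnt2 n h x y = (subspaces n h).card * ((h - 1) * (h - 2)) := by
  have key : ∀ x ∈ (univ : Finset (V n)).erase 0,
      ∑ y ∈ ((univ : Finset (V n)).erase 0).erase x, cnt2 n h x y = cnt n h x * (h - 2) := by
    intro x hx
    have hx0 : x ≠ 0 := Finset.ne_of_mem_erase hx
    unfold cnt2 cnt
    simp_rw [Finset.card_filter]
    rw [Finset.sum_comm, Finset.sum_mul]
    apply Finset.sum_congr rfl
    intro H hH
    obtain ⟨hc, h0, _⟩ := mem_subspaces.mp hH
    by_cases hxH : x ∈ H
    · have hset : (((univ : Finset (V n)).erase 0).erase x).filter (fun y => y ∈ H)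
          = (H.erase 0).erase x := by
        ext a; simp [and_comm, and_left_comm]
      have : ∑ y ∈ ((univ : Finset (V n)).erase 0).erase x,
          (if x ∈ H ∧ y ∈ H then 1 else 0) = (h-1) - 1 := by
        simp only [hxH, true_and]
        rw [← Finset.card_filter, hset, Finset.card_erase_of_mem, Finset.card_erase_of_mem h0, hc]
        exact Finset.mem_erase.mpr ⟨hx0, hxH⟩
      rw [this]
      simp [hxH]
      omega
    · simp [hxH]
  rw [Finset.sum_congr rfl key, ← Finset.sum_mul, sum_cnt, mul_assoc]

lemma cnt_eq {n h : ℕ} {x : V n} (hx : x ≠ 0) :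
    cnt n h x * (Fintype.card (V n) - 1) = (subspaces n h).card * (h - 1) := by
  have hU : ((univ : Finset (V n)).erase 0).card = Fintype.card (V n) - 1 := by
    rw [Finset.card_erase_of_mem (Finset.mem_univ _), Finset.card_univ]
  rw [← sum_cnt n h]
  rw [Finset.sum_congr rfl (fun y hy => (cnt_const (Finset.ne_of_mem_erase hy) hx))]
  rw [Finset.sum_const, hU, smul_eq_mul, mul_comm]

lemma cnt2_eq {n h : ℕ} {x y : V n} (hx : x ≠ 0) (hy : y ≠ 0) (hxy : x ≠ y) :
    cnt2 n h x y * ((Fintype.card (V n) - 1) * (Fintype.card (V n) - 2))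
      = (subspaces n h).card * ((h - 1) * (h - 2)) := by
  have hU : ((univ : Finset (V n)).erase 0).card = Fintype.card (V n) - 1 := by
    rw [Finset.card_erase_of_mem (Finset.mem_univ _), Finset.card_univ]
  rw [← sum_cnt2 n h]
  have : ∀ x' ∈ (univ : Finset (V n)).erase 0,
      ∑ y' ∈ ((univ : Finset (V n)).erase 0).erase x', cnt2 n h x' y'
        = (Fintype.card (V n) - 2) * cnt2 n h x y := by
    intro x' hx'
    have hx'0 : x' ≠ 0 := Finset.ne_of_mem_erase hx'
    rw [Finset.sum_congr rfl (fun y' hy' => cnt2_const hx'0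
        (Finset.ne_of_mem_erase (Finset.mem_of_mem_erase hy'))
        (Ne.symm (Finset.ne_of_mem_erase hy')) hx hy hxy)]
    rw [Finset.sum_const, smul_eq_mul, Finset.card_erase_of_mem hx', hU]
    congr 1
  rw [Finset.sum_congr rfl this, Finset.sum_const, smul_eq_mul, hU]
  ring

lemma sum_T {n : ℕ} (h : ℕ) (g : V n → ℝ) :
    ∑ H ∈ subspaces n h, ∑ x ∈ H, g x = ∑ x : V n, (cnt n h x : ℝ) * g x := by
  have step : ∀ H : Finset (V n), ∑ x ∈ H, g x = ∑ x : V n, if x ∈ H then g x else 0 := by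
    intro H
    rw [Finset.sum_ite_mem, Finset.univ_inter]
  simp_rw [step]
  rw [Finset.sum_comm]
  apply Finset.sum_congr rfl
  intro x _
  rw [Finset.sum_ite, Finset.sum_const_zero, add_zero, Finset.sum_const, cnt]
  simp [mul_comm]

lemma sum_T2 {n : ℕ} (h : ℕ) (g : V n → ℝ) :
    ∑ H ∈ subspaces n h, (∑ x ∈ H, g x) ^ 2
      = ∑ x : V n, ∑ y : V n, (cnt2 n h x y : ℝ) * (g x * g y) := by
  have step : ∀ H : Finset (V n), (∑ x ∈ H, g x) ^ 2
      = ∑ x : V n, ∑ y : V n, if x ∈ H ∧ y ∈ H then g x * g y else 0 := by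
    intro H
    rw [sq, Finset.sum_mul_sum]
    have inner : ∀ x : V n, ∑ y ∈ H, g x * g y
        = ∑ y : V n, if y ∈ H then g x * g y else 0 := by
      intro x; rw [Finset.sum_ite_mem, Finset.univ_inter]
    rw [Finset.sum_congr rfl (fun x _ => inner x)]
    have e2 : ∑ x ∈ H, (∑ y : V n, if y ∈ H then g x * g y else 0)
        = ∑ x : V n, if x ∈ H then (∑ y : V n, if y ∈ H then g x * g y else 0) else 0 := by
      rw [Finset.sum_ite_mem, Finset.univ_inter]
    rw [e2]
    apply Finset.sum_congr rfl
    intro x _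
    by_cases hx : x ∈ H <;> simp [hx]
  simp_rw [step]
  rw [Finset.sum_comm]
  apply Finset.sum_congr rfl
  intro x _
  rw [Finset.sum_comm]
  apply Finset.sum_congr rfl
  intro y _
  rw [Finset.sum_ite, Finset.sum_const_zero, add_zero, Finset.sum_const, cnt2]
  simp [mul_comm]

section main
variable {n : ℕ} {h : ℕ}

lemma split_sum (F : V n → ℝ) :
    ∑ x : V n, F x = F 0 + ∑ x ∈ (univ : Finset (V n)).erase 0, F x :=
  (Finset.add_sum_erase univ F (mem_univ 0)).symm

lemma card_U : ((univ : Finset (V n)).erase 0).card = Fintype.card (V n) - 1 := by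
  rw [Finset.card_erase_of_mem (Finset.mem_univ _), Finset.card_univ]

/-- `∑_H T_H = N g0 + A1`. -/
lemma hST (g : V n → ℝ) :
    ∑ H ∈ subspaces n h, ∑ x ∈ H, g x
      = ((subspaces n h).card : ℝ) * g 0
        + ∑ x ∈ (univ : Finset (V n)).erase 0, (cnt n h x : ℝ) * g x := by
  rw [sum_T h g, split_sum (fun x => (cnt n h x : ℝ) * g x), cnt_zero]

/-- `∑_H T_H² = N g0² + 2 g0 A1 + A2 + B`. -/
lemma hST2 (g : V n → ℝ) :
    ∑ H ∈ subspaces n h, (∑ x ∈ H, g x) ^ 2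
      = ((subspaces n h).card : ℝ) * g 0 ^ 2
        + 2 * g 0 * (∑ x ∈ (univ : Finset (V n)).erase 0, (cnt n h x : ℝ) * g x)
        + (∑ x ∈ (univ : Finset (V n)).erase 0, (cnt n h x : ℝ) * g x ^ 2)
        + ∑ x ∈ (univ : Finset (V n)).erase 0, ∑ y ∈ ((univ : Finset (V n)).erase 0).erase x,
            (cnt2 n h x y : ℝ) * (g x * g y) := by
  set U := (univ : Finset (V n)).erase 0 with hU
  rw [sum_T2 h g, split_sum (fun x => ∑ y : V n, (cnt2 n h x y : ℝ) * (g x * g y))]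
  have p1 : ∑ y : V n, (cnt2 n h 0 y : ℝ) * (g 0 * g y)
      = ((subspaces n h).card : ℝ) * g 0 ^ 2 + g 0 * ∑ y ∈ U, (cnt n h y : ℝ) * g y := by
    rw [split_sum (fun y => (cnt2 n h 0 y : ℝ) * (g 0 * g y)), cnt2_zero_left, cnt_zero,
      Finset.mul_sum]
    rw [Finset.sum_congr rfl (fun y (_ : y ∈ U) => by rw [cnt2_zero_left])]
    rw [Finset.sum_congr rfl (fun y (_ : y ∈ U) => show (cnt n h y : ℝ) * (g 0 * g y)
      = g 0 * ((cnt n h y : ℝ) * g y) by ring)]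
    ring
  have p2 : ∀ x ∈ U, ∑ y : V n, (cnt2 n h x y : ℝ) * (g x * g y)
      = (cnt n h x : ℝ) * (g x * g 0) + ((cnt n h x : ℝ) * g x ^ 2
        + ∑ y ∈ U.erase x, (cnt2 n h x y : ℝ) * (g x * g y)) := by
    intro x hx
    rw [split_sum (fun y => (cnt2 n h x y : ℝ) * (g x * g y)), cnt2_zero_right]
    congr 1
    rw [← Finset.add_sum_erase U (fun y => (cnt2 n h x y : ℝ) * (g x * g y)) hx,
      cnt2_diag]
    congr 1
    ring
  rw [Finset.sum_congr rfl p2, Finset.sum_add_distrib, Finset.sum_add_distrib, p1]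
  rw [Finset.sum_congr rfl (fun x (_ : x ∈ U) => show (cnt n h x : ℝ) * (g x * g 0)
    = g 0 * ((cnt n h x : ℝ) * g x) by ring), ← Finset.mul_sum]
  ring

set_option maxHeartbeats 1000000 in
lemma key_ineq (hpos : 0 < h) (hne : (subspaces n h).Nonempty)
    (g : V n → ℝ) (hgb : ∀ x, |g x| ≤ 1) :
    ((subspaces n h).card : ℝ) * (∑ H ∈ subspaces n h, (∑ x ∈ H, g x) ^ 2)
      - (∑ H ∈ subspaces n h, ∑ x ∈ H, g x) ^ 2
      ≤ 14 * ((subspaces n h).card : ℝ) ^ 2 * h := by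
  classical
  obtain ⟨H0, hH0⟩ := hne
  have hcards : ∀ H ∈ subspaces n h, H.card = h := fun H hH => (mem_subspaces.mp hH).1
  have hhm : h ≤ Fintype.card (V n) := by
    rw [← hcards H0 hH0, ← Finset.card_univ]; exact Finset.card_le_univ H0
  set m := Fintype.card (V n) with hmdef
  set S := subspaces n h with hSdef
  set N := S.card with hNdef
  have hNpos : 0 < N := Finset.card_pos.mpr ⟨H0, hH0⟩
  have hN1 : (1 : ℝ) ≤ (N : ℝ) := by exact_mod_cast hNpos
  have hh1 : (1 : ℝ) ≤ (h : ℝ) := by exact_mod_cast hpos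
  rcases le_or_gt h 14 with hsmall | hbig
  · -- trivial case
    have hT2 : ∀ H ∈ S, (∑ x ∈ H, g x) ^ 2 ≤ (h : ℝ) ^ 2 := by
      intro H hH
      have habs : |∑ x ∈ H, g x| ≤ (h : ℝ) := by
        calc |∑ x ∈ H, g x| ≤ ∑ x ∈ H, |g x| := Finset.abs_sum_le_sum_abs _ _
        _ ≤ ∑ _x ∈ H, (1 : ℝ) := Finset.sum_le_sum fun x _ => hgb x
        _ = (h : ℝ) := by rw [Finset.sum_const, hcards H hH]; simp
      calc (∑ x ∈ H, g x) ^ 2 = |∑ x ∈ H, g x| ^ 2 := (sq_abs _).symm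
      _ ≤ (h : ℝ) ^ 2 := by nlinarith [abs_nonneg (∑ x ∈ H, g x)]
    have hsum2 : ∑ H ∈ S, (∑ x ∈ H, g x) ^ 2 ≤ (N : ℝ) * (h : ℝ) ^ 2 := by
      calc ∑ H ∈ S, (∑ x ∈ H, g x) ^ 2 ≤ ∑ _H ∈ S, (h : ℝ) ^ 2 :=
        Finset.sum_le_sum hT2
      _ = (N : ℝ) * (h : ℝ) ^ 2 := by rw [Finset.sum_const]; simp [hNdef]
    have hh14 : (h : ℝ) ≤ 14 := by exact_mod_cast hsmall
    nlinarith [sq_nonneg (∑ H ∈ S, ∑ x ∈ H, g x), hsum2,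
      mul_le_mul_of_nonneg_left hh14 (mul_nonneg (mul_nonneg (by linarith : (0:ℝ) ≤ N)
        (by linarith : (0:ℝ) ≤ N)) (by linarith : (0:ℝ) ≤ (h:ℝ)))]
  · -- main case
    set U := (univ : Finset (V n)).erase 0 with hUdef
    set G := ∑ x ∈ U, g x with hGdef
    set Q := ∑ x ∈ U, g x ^ 2 with hQdef
    set A1 := ∑ x ∈ U, (cnt n h x : ℝ) * g x with hA1def
    set A2 := ∑ x ∈ U, (cnt n h x : ℝ) * g x ^ 2 with hA2def
    set B := ∑ x ∈ U, ∑ y ∈ U.erase x, (cnt2 n h x y : ℝ) * (g x * g y) with hBdef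
    have e0 : ∑ H ∈ S, ∑ x ∈ H, g x = (N : ℝ) * g 0 + A1 := hST g
    have e0' : ∑ H ∈ S, (∑ x ∈ H, g x) ^ 2
        = (N : ℝ) * g 0 ^ 2 + 2 * g 0 * A1 + A2 + B := hST2 g
    rw [e0, e0']
    have h4 : (4 : ℕ) ≤ h := by omega
    have hm4 : (4 : ℕ) ≤ m := le_trans h4 hhm
    have hmh : (h : ℝ) ≤ (m : ℝ) := by exact_mod_cast hhm
    have hm4' : (4 : ℝ) ≤ (m : ℝ) := by exact_mod_cast hm4
    have hh4' : (4 : ℝ) ≤ (h : ℝ) := by exact_mod_cast h4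
    have ri1 : ∀ x ∈ U, (cnt n h x : ℝ) * ((m : ℝ) - 1) = (N : ℝ) * ((h : ℝ) - 1) := by
      intro x hx
      have hc := cnt_eq (n := n) (h := h) (Finset.ne_of_mem_erase hx)
      rw [← hmdef] at hc
      have := congrArg (Nat.cast : ℕ → ℝ) hc
      push_cast [Nat.cast_sub (show 1 ≤ m by omega), Nat.cast_sub (show 1 ≤ h by omega)]
        at this
      exact this
    have ri2 : ∀ x ∈ U, ∀ y ∈ U.erase x,
        (cnt2 n h x y : ℝ) * (((m : ℝ) - 1) * ((m : ℝ) - 2))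
          = (N : ℝ) * (((h : ℝ) - 1) * ((h : ℝ) - 2)) := by
      intro x hx y hy
      have hc := cnt2_eq (n := n) (h := h) (Finset.ne_of_mem_erase hx)
        (Finset.ne_of_mem_erase (Finset.mem_of_mem_erase hy))
        (Ne.symm (Finset.ne_of_mem_erase hy))
      rw [← hmdef] at hc
      have := congrArg (Nat.cast : ℕ → ℝ) hc
      push_cast [Nat.cast_sub (show 1 ≤ m by omega), Nat.cast_sub (show 1 ≤ h by omega),
        Nat.cast_sub (show 2 ≤ m by omega), Nat.cast_sub (show 2 ≤ h by omega)] at this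
      exact this
    have eA1 : ((m : ℝ) - 1) * A1 = (N : ℝ) * ((h : ℝ) - 1) * G := by
      rw [hA1def, hGdef, Finset.mul_sum, Finset.mul_sum]
      exact Finset.sum_congr rfl fun x hx => by linear_combination g x * ri1 x hx
    have eA2 : ((m : ℝ) - 1) * A2 = (N : ℝ) * ((h : ℝ) - 1) * Q := by
      rw [hA2def, hQdef, Finset.mul_sum, Finset.mul_sum]
      exact Finset.sum_congr rfl fun x hx => by linear_combination g x ^ 2 * ri1 x hx
    have hP : ∑ x ∈ U, ∑ y ∈ U.erase x, g x * g y = G ^ 2 - Q := by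
      have inner : ∀ x ∈ U, ∑ y ∈ U.erase x, g x * g y = g x * G - g x ^ 2 := by
        intro x hx
        rw [← Finset.mul_sum, Finset.sum_erase_eq_sub hx, ← hGdef]
        ring
      rw [Finset.sum_congr rfl inner, Finset.sum_sub_distrib, ← Finset.sum_mul, ← hGdef,
        ← hQdef]
      ring
    have eB : (((m : ℝ) - 1) * ((m : ℝ) - 2)) * B
        = (N : ℝ) * (((h : ℝ) - 1) * ((h : ℝ) - 2)) * (G ^ 2 - Q) := by
      calc (((m : ℝ) - 1) * ((m : ℝ) - 2)) * B
          = ∑ x ∈ U, ∑ y ∈ U.erase x, ((N : ℝ) * (((h : ℝ) - 1) * ((h : ℝ) - 2)))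
            * (g x * g y) := by
            rw [hBdef, Finset.mul_sum]
            refine Finset.sum_congr rfl fun x hx => ?_
            rw [Finset.mul_sum]
            exact Finset.sum_congr rfl fun y hy => by
              linear_combination (g x * g y) * ri2 x hx y hy
        _ = ((N : ℝ) * (((h : ℝ) - 1) * ((h : ℝ) - 2)))
            * ∑ x ∈ U, ∑ y ∈ U.erase x, g x * g y := by
            rw [Finset.mul_sum]
            exact Finset.sum_congr rfl fun x hx => by rw [Finset.mul_sum]
        _ = (N : ℝ) * (((h : ℝ) - 1) * ((h : ℝ) - 2)) * (G ^ 2 - Q) := by rw [hP]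
    -- Cauchy–Schwarz and crude bounds
    have hUcard : (U.card : ℝ) = (m : ℝ) - 1 := by
      rw [card_U, ← hmdef]
      push_cast [Nat.cast_sub (show 1 ≤ m by omega)]
      ring
    have hCS : G ^ 2 ≤ ((m : ℝ) - 1) * Q := by
      have hcs := sq_sum_le_card_mul_sum_sq (s := U) (f := g)
      rw [← hGdef, ← hQdef, hUcard] at hcs
      exact hcs
    have hQub : Q ≤ (m : ℝ) - 1 := by
      calc Q ≤ ∑ _x ∈ U, (1 : ℝ) := Finset.sum_le_sum fun x _ => by
            nlinarith [hgb x, abs_nonneg (g x), sq_abs (g x)]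
      _ = (m : ℝ) - 1 := by rw [Finset.sum_const, nsmul_eq_mul, mul_one, hUcard]
    have hQ0 : 0 ≤ Q := Finset.sum_nonneg fun x _ => sq_nonneg _
    clear_value m N G Q A1 A2 B
    clear ri1 ri2 hP hcards hH0 hUdef hGdef hQdef hA1def hA2def hBdef hSdef hNdef hmdef
    -- the exact identity
    have idD : ((m : ℝ) - 1) ^ 2 * ((m : ℝ) - 2) * ((N : ℝ) * A2 + (N : ℝ) * B - A1 ^ 2)
        = (N : ℝ) ^ 2 * ((h : ℝ) - 1) * ((m : ℝ) - (h : ℝ)) * (((m : ℝ) - 1) * Q - G ^ 2) := by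
      linear_combination ((N : ℝ) * ((m : ℝ) - 1) * ((m : ℝ) - 2)) * eA2
        + ((N : ℝ) * ((m : ℝ) - 1)) * eB
        - (((m : ℝ) - 2) * (((m : ℝ) - 1) * A1 + (N : ℝ) * ((h : ℝ) - 1) * G)) * eA1
    clear eA1 eA2 eB hgb
    have main : (N : ℝ) * A2 + (N : ℝ) * B - A1 ^ 2 ≤ 14 * (N : ℝ) ^ 2 * h := by
      clear e0 e0'
      have hfacpos : (0 : ℝ) < ((m : ℝ) - 1) ^ 2 * ((m : ℝ) - 2) := by
        have h1 : (0:ℝ) < ((m : ℝ) - 1) ^ 2 := by nlinarith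
        have h2 : (0:ℝ) < (m : ℝ) - 2 := by linarith
        exact mul_pos h1 h2
      rw [← mul_le_mul_iff_of_pos_left hfacpos, idD]
      have t1 : 0 ≤ ((m : ℝ) - 1) * Q - G ^ 2 := by linarith [hCS]
      have t2 : ((m : ℝ) - 1) * Q - G ^ 2 ≤ ((m : ℝ) - 1) * ((m : ℝ) - 1) := by
        nlinarith [sq_nonneg G]
      have t3 : ((h : ℝ) - 1) * ((m : ℝ) - (h : ℝ)) ≤ (h : ℝ) * ((m : ℝ) - 2) := by
        nlinarith
      have hnn : (0:ℝ) ≤ (N : ℝ) ^ 2 * ((h : ℝ) - 1) * ((m : ℝ) - (h : ℝ)) :=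
        mul_nonneg (mul_nonneg (sq_nonneg _) (by linarith)) (by linarith)
      have c1 : (N : ℝ) ^ 2 * ((h : ℝ) - 1) * ((m : ℝ) - (h : ℝ)) * (((m : ℝ) - 1) * Q - G ^ 2)
          ≤ (N : ℝ) ^ 2 * ((h : ℝ) - 1) * ((m : ℝ) - (h : ℝ)) * (((m : ℝ) - 1) * ((m : ℝ) - 1)) :=
        mul_le_mul_of_nonneg_left t2 hnn
      have c2 : (N : ℝ) ^ 2 * ((h : ℝ) - 1) * ((m : ℝ) - (h : ℝ)) * (((m : ℝ) - 1) * ((m : ℝ) - 1))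
          ≤ (N : ℝ) ^ 2 * ((h : ℝ) * ((m : ℝ) - 2)) * (((m : ℝ) - 1) * ((m : ℝ) - 1)) := by
        nlinarith [mul_le_mul_of_nonneg_right
          (mul_le_mul_of_nonneg_left t3 (sq_nonneg (N : ℝ)))
          (mul_nonneg (show (0:ℝ) ≤ (m : ℝ) - 1 by linarith)
            (show (0:ℝ) ≤ (m : ℝ) - 1 by linarith))]
      have hX : (0:ℝ) ≤ (N : ℝ) ^ 2 * ((h : ℝ) * ((m : ℝ) - 2)) * (((m : ℝ) - 1) * ((m : ℝ) - 1)) :=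
        mul_nonneg (mul_nonneg (sq_nonneg _)
          (mul_nonneg (by linarith) (by linarith))) (mul_nonneg (by linarith) (by linarith))
      have c3 : (N : ℝ) ^ 2 * ((h : ℝ) * ((m : ℝ) - 2)) * (((m : ℝ) - 1) * ((m : ℝ) - 1))
          ≤ ((m : ℝ) - 1) ^ 2 * ((m : ℝ) - 2) * (14 * (N : ℝ) ^ 2 * (h : ℝ)) := by
        nlinarith [hX]
      linarith [c1, c2, c3]
    have expand : (N : ℝ) * ((N : ℝ) * g 0 ^ 2 + 2 * g 0 * A1 + A2 + B)
        - ((N : ℝ) * g 0 + A1) ^ 2 = (N : ℝ) * A2 + (N : ℝ) * B - A1 ^ 2 := by ring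
    linarith [main, expand]

set_option maxHeartbeats 1000000 in
lemma bias_bound (hpos : 0 < h) (hne : (subspaces n h).Nonempty)
    (g : V n → ℝ) (hgb : ∀ x, |g x| ≤ 1) :
    |(∑ H ∈ subspaces n h, ∑ x ∈ H, g x) / (h * ((subspaces n h).card : ℝ))
      - (∑ x : V n, g x) / (Fintype.card (V n) : ℝ)| ≤ 2 / h := by
  classical
  obtain ⟨H0, hH0⟩ := hne
  have hcards : ∀ H ∈ subspaces n h, H.card = h := fun H hH => (mem_subspaces.mp hH).1
  have hhm : h ≤ Fintype.card (V n) := by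
    rw [← hcards H0 hH0, ← Finset.card_univ]; exact Finset.card_le_univ H0
  set m := Fintype.card (V n) with hmdef
  set S := subspaces n h with hSdef
  set N := S.card with hNdef
  have hNpos : 0 < N := Finset.card_pos.mpr ⟨H0, hH0⟩
  have hN1 : (1 : ℝ) ≤ (N : ℝ) := by exact_mod_cast hNpos
  have hh1 : (1 : ℝ) ≤ (h : ℝ) := by exact_mod_cast hpos
  have hm1' : 1 ≤ m := Fintype.card_pos
  have hm1 : (1 : ℝ) ≤ (m : ℝ) := by exact_mod_cast hm1'
  set U := (univ : Finset (V n)).erase 0 with hUdef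
  set G := ∑ x ∈ U, g x with hGdef
  set A1 := ∑ x ∈ U, (cnt n h x : ℝ) * g x with hA1def
  set ST := ∑ H ∈ S, ∑ x ∈ H, g x with hSTdef
  have e0 : ST = (N : ℝ) * g 0 + A1 := hST g
  have hUcard : (U.card : ℝ) = (m : ℝ) - 1 := by
    rw [card_U, ← hmdef]
    push_cast [Nat.cast_sub (show 1 ≤ m by omega)]
    ring
  have hGb : |G| ≤ (m : ℝ) - 1 := by
    calc |G| ≤ ∑ x ∈ U, |g x| := Finset.abs_sum_le_sum_abs _ _
    _ ≤ ∑ _x ∈ U, (1 : ℝ) := Finset.sum_le_sum fun x _ => hgb x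
    _ = (m : ℝ) - 1 := by rw [Finset.sum_const, nsmul_eq_mul, mul_one, hUcard]
  have hsplit : ∑ x : V n, g x = g 0 + G := split_sum g
  have hSTb : |ST| ≤ (N : ℝ) * h := by
    rw [hSTdef]
    calc |∑ H ∈ S, ∑ x ∈ H, g x| ≤ ∑ H ∈ S, |∑ x ∈ H, g x| :=
      Finset.abs_sum_le_sum_abs _ _
    _ ≤ ∑ H ∈ S, (h : ℝ) := by
        refine Finset.sum_le_sum fun H hH => ?_
        calc |∑ x ∈ H, g x| ≤ ∑ x ∈ H, |g x| := Finset.abs_sum_le_sum_abs _ _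
        _ ≤ ∑ _x ∈ H, (1 : ℝ) := Finset.sum_le_sum fun x _ => hgb x
        _ = (h : ℝ) := by rw [Finset.sum_const, hcards H hH]; simp
    _ = (N : ℝ) * h := by rw [Finset.sum_const, nsmul_eq_mul]
  rw [hsplit]
  rcases eq_or_lt_of_le (show 1 ≤ h from hpos) with h1 | h2
  · -- h = 1 : trivial bound
    have hh : (h : ℝ) = 1 := by exact_mod_cast h1.symm
    have b1 : |ST / (h * (N : ℝ))| ≤ 1 := by
      rw [abs_div, abs_of_pos (by nlinarith : (0:ℝ) < (h : ℝ) * N),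
        div_le_one (by nlinarith : (0:ℝ) < (h : ℝ) * N)]
      calc |ST| ≤ (N : ℝ) * h := hSTb
      _ = (h : ℝ) * N := by ring
    have b2 : |(g 0 + G) / (m : ℝ)| ≤ 1 := by
      rw [abs_div, abs_of_pos (by linarith : (0:ℝ) < (m : ℝ)),
        div_le_one (by linarith : (0:ℝ) < (m : ℝ))]
      calc |g 0 + G| ≤ |g 0| + |G| := abs_add_le _ _
      _ ≤ 1 + ((m : ℝ) - 1) := add_le_add (hgb 0) hGb
      _ = (m : ℝ) := by ring
    calc |ST / (h * (N : ℝ)) - (g 0 + G) / (m : ℝ)|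
        ≤ |ST / (h * (N : ℝ))| + |(g 0 + G) / (m : ℝ)| := by
          rw [sub_eq_add_neg]
          exact (abs_add_le _ _).trans (by rw [abs_neg])
      _ ≤ 2 / h := by rw [hh] at b1 ⊢; norm_num at b1 ⊢; linarith [b1, b2]
  · -- h ≥ 2
    have hh2 : (2 : ℝ) ≤ (h : ℝ) := by exact_mod_cast h2
    have hm2 : (2 : ℝ) ≤ (m : ℝ) := by
      have : (h : ℝ) ≤ (m : ℝ) := by exact_mod_cast hhm
      linarith
    have hmh : (h : ℝ) ≤ (m : ℝ) := by exact_mod_cast hhm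
    have ri1 : ∀ x ∈ U, (cnt n h x : ℝ) * ((m : ℝ) - 1) = (N : ℝ) * ((h : ℝ) - 1) := by
      intro x hx
      have hc := cnt_eq (n := n) (h := h) (Finset.ne_of_mem_erase hx)
      rw [← hmdef] at hc
      have := congrArg (Nat.cast : ℕ → ℝ) hc
      push_cast [Nat.cast_sub (show 1 ≤ m by omega), Nat.cast_sub (show 1 ≤ h by omega)]
        at this
      exact this
    have eA1 : ((m : ℝ) - 1) * A1 = (N : ℝ) * ((h : ℝ) - 1) * G := by
      rw [hA1def, hGdef, Finset.mul_sum, Finset.mul_sum]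
      exact Finset.sum_congr rfl fun x hx => by linear_combination g x * ri1 x hx
    clear_value m N G A1 ST
    clear ri1 hGdef hA1def hSTdef hUdef hSdef hNdef hmdef hcards hH0 hsplit
    have hbid : (m : ℝ) * ((m : ℝ) - 1) * ST - ((m : ℝ) - 1) * h * N * (g 0 + G)
        = (N : ℝ) * ((m : ℝ) - (h : ℝ)) * (((m : ℝ) - 1) * g 0 - G) := by
      linear_combination ((m : ℝ) * ((m : ℝ) - 1)) * e0 + (m : ℝ) * eA1
    have hden : (0 : ℝ) < (m : ℝ) * ((m : ℝ) - 1) * ((h : ℝ) * N) :=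
      mul_pos (mul_pos (by linarith) (by linarith)) (mul_pos (by linarith) (by linarith))
    have hd : ST / (h * (N : ℝ)) - (g 0 + G) / (m : ℝ)
        = ((N : ℝ) * ((m : ℝ) - (h : ℝ)) * (((m : ℝ) - 1) * g 0 - G))
          / ((m : ℝ) * ((m : ℝ) - 1) * ((h : ℝ) * N)) := by
      rw [← hbid]
      have hm1ne : (m : ℝ) - 1 ≠ 0 := (by linarith : (0:ℝ) < (m : ℝ) - 1).ne'
      field_simp
    rw [hd, abs_div, abs_of_pos hden, div_le_div_iff₀ hden (by linarith : (0:ℝ) < (h : ℝ))]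
    have hnum : |(N : ℝ) * ((m : ℝ) - (h : ℝ)) * (((m : ℝ) - 1) * g 0 - G)|
        ≤ (N : ℝ) * ((m : ℝ) - (h : ℝ)) * (2 * ((m : ℝ) - 1)) := by
      rw [abs_mul]
      have e1 : |(N : ℝ) * ((m : ℝ) - (h : ℝ))| = (N : ℝ) * ((m : ℝ) - (h : ℝ)) :=
        abs_of_nonneg (mul_nonneg (by linarith) (by linarith))
      rw [e1]
      apply mul_le_mul_of_nonneg_left _ (mul_nonneg (by linarith) (by linarith))
      calc |((m : ℝ) - 1) * g 0 - G| ≤ |((m : ℝ) - 1) * g 0| + |G| := by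
            rw [sub_eq_add_neg]
            exact (abs_add_le _ _).trans (by rw [abs_neg])
      _ ≤ ((m : ℝ) - 1) * 1 + ((m : ℝ) - 1) := by
          refine add_le_add ?_ hGb
          rw [abs_mul, abs_of_nonneg (by linarith : (0:ℝ) ≤ (m : ℝ) - 1)]
          exact mul_le_mul_of_nonneg_left (hgb 0) (by linarith)
      _ = 2 * ((m : ℝ) - 1) := by ring
    calc |(N : ℝ) * ((m : ℝ) - (h : ℝ)) * (((m : ℝ) - 1) * g 0 - G)| * h
        ≤ ((N : ℝ) * ((m : ℝ) - (h : ℝ)) * (2 * ((m : ℝ) - 1))) * h :=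
          mul_le_mul_of_nonneg_right hnum (by linarith)
      _ ≤ 2 * ((m : ℝ) * ((m : ℝ) - 1) * ((h : ℝ) * N)) := by nlinarith
end main

set_option maxHeartbeats 1000000 in
theorem stmt16 {n : ℕ} (h : ℕ) (hpos : 0 < h) (hne : (subspaces n h).Nonempty)
    (f : V n → ℝ) (hf : IsBool f) (α : V n) :
    EH n h (fun H => (fhatOn f H α - EH n h (fun H' => fhatOn f H' α)) ^ 2) ≤ 14 / h ∧
    ∀ η : ℝ, 0 < η →
      (((subspaces n h).filter fun H => 2 / h + η ≤ |fhatOn f H α - fhat f α|).card : ℝ) /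
          ((subspaces n h).card : ℝ) ≤ 14 / (h * η ^ 2) := by
  classical
  obtain ⟨H0, hH0⟩ := id hne
  set g : V n → ℝ := fun x => f x * (-1 : ℝ) ^ (dotp α x).val with hgdef
  have hgb : ∀ x, |g x| ≤ 1 := by
    intro x
    rw [hgdef]
    simp only [abs_mul, abs_pow, abs_neg, abs_one, one_pow, mul_one]
    rcases hf x with h0 | h0 <;> simp [h0]
  have hN : (0 : ℝ) < ((subspaces n h).card : ℝ) := by
    exact_mod_cast Finset.card_pos.mpr ⟨H0, hH0⟩
  have hh0 : (0 : ℝ) < (h : ℝ) := by exact_mod_cast hpos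
  have hcards : ∀ H ∈ subspaces n h, H.card = h := fun H hH => (mem_subspaces.mp hH).1
  have hT : ∀ H ∈ subspaces n h, fhatOn f H α = (∑ x ∈ H, g x) / h := by
    intro H hH
    unfold fhatOn
    rw [hcards H hH, hgdef]
  set S := subspaces n h with hSdef
  set N := S.card with hNdef
  set ST := ∑ H ∈ S, ∑ x ∈ H, g x with hSTdef
  set ST2 := ∑ H ∈ S, (∑ x ∈ H, g x) ^ 2 with hST2def
  have key := key_ineq hpos hne g hgb
  rw [← hSdef, ← hNdef, ← hSTdef, ← hST2def] at key
  have hmu : EH n h (fun H' => fhatOn f H' α) = ST / (h * N) := by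
    unfold EH
    rw [Finset.sum_congr rfl hT, ← Finset.sum_div, div_div]
  have e1 : ∑ H ∈ S, ((∑ x ∈ H, g x) / h - ST / (h * N)) ^ 2
      = ((N : ℝ) * ST2 - ST ^ 2) / ((N : ℝ) * h ^ 2) := by
    have expand : ∀ H : Finset (V n), ((∑ x ∈ H, g x) / h - ST / (h * N)) ^ 2
        = (∑ x ∈ H, g x) ^ 2 * (1 / h ^ 2) - (∑ x ∈ H, g x) * (2 * ST / (h ^ 2 * N))
          + ST ^ 2 / (h ^ 2 * N ^ 2) := by
      intro H
      field_simp
      ring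
    rw [Finset.sum_congr rfl fun H _ => expand H, Finset.sum_add_distrib,
      Finset.sum_sub_distrib, ← Finset.sum_mul, ← Finset.sum_mul, Finset.sum_const,
      nsmul_eq_mul, ← hSTdef, ← hST2def, ← hNdef]
    field_simp
    ring
  have hsum : ∑ H ∈ S, (fhatOn f H α - ST / (h * N)) ^ 2 ≤ 14 / h * N := by
    rw [Finset.sum_congr rfl (fun H hH => by rw [hT H hH]), e1]
    rw [div_le_iff₀ (by positivity : (0 : ℝ) < (N : ℝ) * h ^ 2)]
    have hid : 14 / (h : ℝ) * N * ((N : ℝ) * h ^ 2) = 14 * (N : ℝ) ^ 2 * h := by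
      field_simp
    linarith [key, hid.le, hid.ge]
  have goal1 : EH n h (fun H => (fhatOn f H α - EH n h fun H' => fhatOn f H' α) ^ 2)
      ≤ 14 / h := by
    rw [hmu]
    unfold EH
    rw [← hSdef, ← hNdef, div_le_iff₀ hN]
    calc ∑ H ∈ S, (fhatOn f H α - ST / (h * N)) ^ 2 ≤ 14 / h * N := hsum
    _ = 14 / h * N := rfl
  refine ⟨goal1, ?_⟩
  intro η hη
  -- the bias bound
  have hcard2 : Fintype.card (V n) = 2 ^ n := by
    rw [Fintype.card_fun]
    simp
  have hfhat2 : fhat f α = (∑ x : V n, g x) / (Fintype.card (V n) : ℝ) := by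
    unfold fhat
    rw [hgdef, hcard2]
    push_cast
    rfl
  have hbias := bias_bound hpos hne g hgb
  rw [← hSdef, ← hNdef, ← hSTdef, ← hfhat2] at hbias
  -- Chebyshev
  have hstep : ∀ H ∈ S.filter fun H => 2 / (h : ℝ) + η ≤ |fhatOn f H α - fhat f α|,
      η ^ 2 ≤ (fhatOn f H α - ST / (h * N)) ^ 2 := by
    intro H hH
    obtain ⟨hH1, hH2⟩ := Finset.mem_filter.mp hH
    have tri : |fhatOn f H α - fhat f α| ≤ |fhatOn f H α - ST / (h * N)|
        + |ST / (h * N) - fhat f α| := abs_sub_le _ _ _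
    have hetale : η ≤ |fhatOn f H α - ST / (h * N)| := by linarith
    have := pow_le_pow_left₀ hη.le hetale 2
    rwa [sq_abs] at this
  have c1 : ((S.filter fun H => 2 / (h : ℝ) + η ≤ |fhatOn f H α - fhat f α|).card : ℝ) * η ^ 2
      ≤ ∑ H ∈ S.filter fun H => 2 / (h : ℝ) + η ≤ |fhatOn f H α - fhat f α|,
          (fhatOn f H α - ST / (h * N)) ^ 2 := by
    have := Finset.card_nsmul_le_sum
      (S.filter fun H => 2 / (h : ℝ) + η ≤ |fhatOn f H α - fhat f α|)
      (fun H => (fhatOn f H α - ST / (h * N)) ^ 2) (η ^ 2) hstep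
    rwa [nsmul_eq_mul] at this
  have c2 : ∑ H ∈ S.filter fun H => 2 / (h : ℝ) + η ≤ |fhatOn f H α - fhat f α|,
        (fhatOn f H α - ST / (h * N)) ^ 2
      ≤ ∑ H ∈ S, (fhatOn f H α - ST / (h * N)) ^ 2 :=
    Finset.sum_le_sum_of_subset_of_nonneg (Finset.filter_subset _ _)
      fun H _ _ => sq_nonneg _
  have cmain : ((S.filter fun H => 2 / (h : ℝ) + η ≤ |fhatOn f H α - fhat f α|).card : ℝ)
      * η ^ 2 ≤ 14 / h * N := by linarith [c1, c2, hsum]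
  rw [div_le_div_iff₀ hN (by positivity : (0 : ℝ) < (h : ℝ) * η ^ 2)]
  have hid2 : 14 / (h : ℝ) * N * h = 14 * N := by field_simp
  nlinarith [mul_le_mul_of_nonneg_right cmain hh0.le, hid2,
    sq_nonneg η, hη, hh0]
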